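/- arXiv:1406.6894 — 3 statements merged into one kernel-verified Lean document; each statement's English description precedes it below -/
import Mathlib

section
/- Let L/K be a finite Galois extension of fields with Galois group G and let x ∈ L. Then x generates L as a K[G]-module (i.e. {z•x : z ∈ K[G]} = L, equivalently {σ(x) : σ ∈ G} is a K-basis of L) if and only if x generates L as an H_λ-module (i.e. {h·x : h ∈ H_λ} = L). -/
/- `L/K` is a finite Galois extension with Galois group `G = L ≃ₐ[K] L`.
The group algebra `K[G]` acts on `L` by `(∑ c_σ σ) • x = ∑ c_σ σ(x)`. -/
noncomputable def kAct (K L : Type*) [Field K] [Field L] [Algebra K L]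
    (z : MonoidAlgebra K (L ≃ₐ[K] L)) (x : L) : L :=
  z.coeff.sum fun σ c => c • σ x

/- `L[G]` acts `K`-linearly on `L` by `(∑ c_τ τ) · x = ∑ c_τ τ⁻¹(x)`. -/
noncomputable def lAct (K L : Type*) [Field K] [Field L] [Algebra K L]
    (z : MonoidAlgebra L (L ≃ₐ[K] L)) (x : L) : L :=
  z.coeff.sum fun τ c => c * τ⁻¹ x

/- The twisted action of `G` on `L[G]`: `σ ∗ (c τ) = σ(c) (στσ⁻¹)`. -/
noncomputable def twist (K L : Type*) [Field K] [Field L] [Algebra K L]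
    (σ : L ≃ₐ[K] L) (z : MonoidAlgebra L (L ≃ₐ[K] L)) :
    MonoidAlgebra L (L ≃ₐ[K] L) :=
  z.coeff.sum fun τ c => MonoidAlgebra.single (σ * τ * σ⁻¹) (σ c)

/- `H_λ = L[G]^G`, the Hopf algebra giving the canonical nonclassical
Hopf–Galois structure. -/
def Hlambda (K L : Type*) [Field K] [Field L] [Algebra K L] :
    Set (MonoidAlgebra L (L ≃ₐ[K] L)) :=
  {h | ∀ σ : L ≃ₐ[K] L, twist K L σ h = h}


section NBG
set_option linter.unusedSectionVars false
open Module
variable (K L : Type*) [Field K] [Field L] [Algebra K L] [FiniteDimensional K L] [IsGalois K L]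
local notation "G" => (L ≃ₐ[K] L)



lemma kAct_eq_sum (z : MonoidAlgebra K G) (x : L) :
    kAct K L z x = ∑ σ : G, z.coeff σ • σ x :=
  Finsupp.sum_fintype _ _ (by simp)

lemma twist_coeff (σ : G) (h : MonoidAlgebra L G) (ρ : G) :
    (twist K L σ h).coeff ρ = σ (h.coeff (σ⁻¹ * ρ * σ)) := by
  classical
  rw [twist, MonoidAlgebra.coeff_finsuppSum, Finsupp.sum_apply, Finsupp.sum]
  have hcond : ∀ τ : G, (σ * τ * σ⁻¹ = ρ) = (τ = σ⁻¹ * ρ * σ) := by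
    intro τ
    apply propext
    constructor
    · rintro rfl; group
    · rintro rfl; group
  have : ∀ τ ∈ h.coeff.support, (MonoidAlgebra.single (σ * τ * σ⁻¹) (σ (h.coeff τ))).coeff ρ
      = if τ = σ⁻¹ * ρ * σ then σ (h.coeff τ) else 0 := by
    intro τ _
    rw [MonoidAlgebra.coeff_single, Finsupp.single_apply, ← hcond]
  rw [Finset.sum_congr rfl this, Finset.sum_ite_eq' h.coeff.support (σ⁻¹ * ρ * σ)
    (fun τ => σ (h.coeff τ))]
  split_ifs with hmem
  · rfl
  · rw [Finsupp.notMem_support_iff.mp hmem, map_zero]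


lemma lAct_eq_sum (z : MonoidAlgebra L G) (y : L) :
    lAct K L z y = ∑ τ : G, z.coeff τ * τ⁻¹ y :=
  Finsupp.sum_fintype _ _ (by simp)

noncomputable def Phi : MonoidAlgebra L G →ₗ[K] (L →ₗ[K] L) where
  toFun z := ∑ τ : G, z.coeff τ • (τ⁻¹ : G).toLinearMap
  map_add' z w := by
    show ∑ τ : G, (z + w).coeff τ • ((τ⁻¹:G).toLinearMap : L →ₗ[K] L)
      = (∑ τ : G, z.coeff τ • ((τ⁻¹:G).toLinearMap : L →ₗ[K] L))
        + ∑ τ : G, w.coeff τ • ((τ⁻¹:G).toLinearMap : L →ₗ[K] L)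
    rw [Finset.sum_congr rfl (fun τ _ => by
      rw [MonoidAlgebra.coeff_add, Finsupp.add_apply z.coeff w.coeff τ, add_smul] :
      ∀ τ ∈ Finset.univ, (z + w).coeff τ • ((τ⁻¹:G).toLinearMap : L →ₗ[K] L)
        = z.coeff τ • (τ⁻¹:G).toLinearMap + w.coeff τ • (τ⁻¹:G).toLinearMap),
      Finset.sum_add_distrib]
  map_smul' c z := by
    show ∑ τ : G, (c • z).coeff τ • ((τ⁻¹:G).toLinearMap : L →ₗ[K] L)
      = RingHom.id K c • ∑ τ : G, z.coeff τ • ((τ⁻¹:G).toLinearMap : L →ₗ[K] L)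
    rw [RingHom.id_apply, Finset.smul_sum,
      Finset.sum_congr rfl (fun τ _ => by
      rw [MonoidAlgebra.coeff_smul_apply, smul_assoc] :
      ∀ τ ∈ Finset.univ, (c • z).coeff τ • ((τ⁻¹:G).toLinearMap : L →ₗ[K] L)
        = c • (z.coeff τ • (τ⁻¹:G).toLinearMap))]

lemma Phi_apply (z : MonoidAlgebra L G) (y : L) : Phi K L z y = lAct K L z y := by
  rw [lAct_eq_sum, Phi]
  simp [AlgEquiv.toLinearMap_apply, smul_eq_mul]

lemma Phi_injective : Function.Injective (Phi K L) := by
  classical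
  rw [injective_iff_map_eq_zero]
  intro z hz
  have li : LinearIndependent L (fun τ : G => ((MonoidHomClass.toMonoidHom (τ⁻¹ : G) : L →* L) : L → L)) := by
    apply (linearIndependent_monoidHom L L).comp
    intro τ ρ hh
    have : (τ⁻¹ : G) = (ρ⁻¹ : G) := by
      apply AlgEquiv.ext
      intro y
      exact DFunLike.congr_fun hh y
    simpa using congrArg Inv.inv this
  have h0 : ∑ τ : G, z.coeff τ • ((MonoidHomClass.toMonoidHom (τ⁻¹ : G) : L →* L) : L → L) = 0 := by
    funext y
    have := congrArg (fun f : L →ₗ[K] L => f y) hz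
    simp only [LinearMap.zero_apply] at this
    rw [Phi] at this
    simpa [Finset.sum_apply, Pi.smul_apply, smul_eq_mul] using this
  have := Fintype.linearIndependent_iff.mp li (fun τ => z.coeff τ) h0
  apply MonoidAlgebra.coeff_injective
  ext τ
  exact this τ

noncomputable def malgEquiv : MonoidAlgebra L G ≃ₗ[L] (G → L) :=
  (MonoidAlgebra.coeffLinearEquiv L).trans (Finsupp.linearEquivFunOnFinite L L G)

instance : FiniteDimensional L (MonoidAlgebra L G) :=
  Module.Finite.equiv (malgEquiv K L).symm

lemma finrank_malg_L : finrank L (MonoidAlgebra L G) = Fintype.card G := by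
  rw [(malgEquiv K L).finrank_eq, Module.finrank_pi]

instance : FiniteDimensional K (MonoidAlgebra L G) := by
  have : IsScalarTower K L (MonoidAlgebra L G) := inferInstance
  exact FiniteDimensional.trans K L (MonoidAlgebra L G)

lemma finrank_malg_K :
    finrank K (MonoidAlgebra L G) = Fintype.card G * finrank K L := by
  have : IsScalarTower K L (MonoidAlgebra L G) := inferInstance
  rw [← Module.finrank_mul_finrank K L (MonoidAlgebra L G), finrank_malg_L, mul_comm]

lemma Phi_surjective : Function.Surjective (Phi K L) := by
  have hrank : finrank K (MonoidAlgebra L G) = finrank K (L →ₗ[K] L) := by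
    rw [finrank_malg_K, Module.finrank_linearMap, ← Nat.card_eq_fintype_card, IsGalois.card_aut_eq_finrank]
  have hinj := Phi_injective K L
  rw [← LinearMap.range_eq_top]
  apply Submodule.eq_top_of_finrank_eq
  rw [(LinearEquiv.ofInjective (Phi K L) hinj).symm.finrank_eq, hrank]

lemma lAct_twist (σ : G) (h : MonoidAlgebra L G) (y : L) :
    lAct K L (twist K L σ h) y = σ (lAct K L h (σ⁻¹ y)) := by
  rw [lAct_eq_sum, lAct_eq_sum, map_sum]
  apply Fintype.sum_equiv (MulAut.conj σ⁻¹).toEquiv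
  intro τ
  have e1 : (MulAut.conj σ⁻¹).toEquiv τ = σ⁻¹ * τ * σ := by
    simp [MulAut.conj_apply]
  rw [e1, twist_coeff, map_mul σ (h.coeff (σ⁻¹ * τ * σ))]
  congr 1
  have key : σ ((σ⁻¹ * τ * σ)⁻¹ ((σ⁻¹ : G) y)) = (σ * (σ⁻¹ * τ * σ)⁻¹ * σ⁻¹) y := rfl
  rw [key]
  have : σ * (σ⁻¹ * τ * σ)⁻¹ * σ⁻¹ = τ⁻¹ := by group
  rw [this]

lemma mem_Hlambda_iff (h : MonoidAlgebra L G) :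
    h ∈ Hlambda K L ↔ ∀ (σ : G) (y : L), lAct K L h (σ y) = σ (lAct K L h y) := by
  constructor
  · intro hh σ y
    conv_lhs => rw [← hh σ]
    rw [lAct_twist]
    exact congrArg σ (by
      show lAct K L h (σ.symm (σ y)) = lAct K L h y
      rw [σ.symm_apply_apply])
  · intro hcomm σ
    apply Phi_injective K L
    apply LinearMap.ext
    intro y
    rw [Phi_apply, Phi_apply, lAct_twist, ← hcomm σ ((σ⁻¹ : G) y)]
    show lAct K L h (σ (σ.symm y)) = lAct K L h y
    rw [σ.apply_symm_apply]

lemma twist_zero (σ : G) : twist K L σ (0 : MonoidAlgebra L G) = 0 := by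
  apply MonoidAlgebra.coeff_injective
  ext ρ
  rw [twist_coeff]
  simp

def Esub : Submodule K (L →ₗ[K] L) where
  carrier := {f | ∀ σ : G, σ.toLinearMap ∘ₗ f = f ∘ₗ σ.toLinearMap}
  add_mem' := by
    intro a b ha hb σ
    rw [LinearMap.comp_add, LinearMap.add_comp, ha σ, hb σ]
  zero_mem' := by
    intro σ
    simp
  smul_mem' := by
    intro c f hf σ
    apply LinearMap.ext
    intro y
    have := LinearMap.ext_iff.mp (hf σ) y
    simp only [LinearMap.comp_apply, LinearMap.smul_apply] at this ⊢
    rw [map_smul, this]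

noncomputable def Hsub : Submodule K (MonoidAlgebra L G) :=
  (Esub K L).comap (Phi K L)

lemma mem_Hsub_iff (h : MonoidAlgebra L G) : h ∈ Hsub K L ↔ h ∈ Hlambda K L := by
  rw [Hsub, Submodule.mem_comap, mem_Hlambda_iff]
  constructor
  · intro he σ y
    have := LinearMap.ext_iff.mp (he σ) y
    simp only [LinearMap.comp_apply, AlgEquiv.toLinearMap_apply, Phi_apply] at this
    exact this.symm
  · intro hc σ
    apply LinearMap.ext
    intro y
    simp only [LinearMap.comp_apply, AlgEquiv.toLinearMap_apply, Phi_apply]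
    exact (hc σ y).symm

lemma twist_sum_smul {m : ℕ} (σ : G) (a : Fin m → L) (v : Fin m → MonoidAlgebra L G) :
    twist K L σ (∑ i, a i • v i) = ∑ i, σ (a i) • twist K L σ (v i) := by
  apply MonoidAlgebra.coeff_injective
  ext ρ
  rw [twist_coeff, MonoidAlgebra.coeff_sum, MonoidAlgebra.coeff_sum, Finsupp.finset_sum_apply, Finsupp.finset_sum_apply]
  rw [Finset.sum_congr rfl (fun i _ => by
      rw [MonoidAlgebra.coeff_smul_apply, smul_eq_mul] :
      ∀ i ∈ Finset.univ, (a i • v i).coeff (σ⁻¹ * ρ * σ) = a i * (v i).coeff (σ⁻¹ * ρ * σ)),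
    map_sum,
    Finset.sum_congr rfl (fun i _ => by
      rw [MonoidAlgebra.coeff_smul_apply, smul_eq_mul, twist_coeff] :
      ∀ i ∈ Finset.univ, (σ (a i) • twist K L σ (v i)).coeff ρ
        = σ (a i) * σ ((v i).coeff (σ⁻¹ * ρ * σ)))]
  exact Finset.sum_congr rfl (fun i _ => map_mul σ _ _)

lemma finrank_Hsub_le : finrank K (Hsub K L) ≤ Fintype.card G := by
  classical
  set m := finrank K (Hsub K L) with hm
  let b : Basis (Fin m) K (Hsub K L) := Module.finBasis K (Hsub K L)
  have lik : LinearIndependent K (fun i : Fin m => ((b i : MonoidAlgebra L G))) :=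
    b.linearIndependent.map' (Hsub K L).subtype (Submodule.ker_subtype _)
  have liL : LinearIndependent L (fun i : Fin m => ((b i : MonoidAlgebra L G))) := by
    rw [Fintype.linearIndependent_iff]
    intro a ha i
    have key : ∀ c : L, Algebra.trace K L (c * a i) = 0 := by
      intro c
      have htw : ∀ σ : G, twist K L σ (∑ j, a j • ((b j : MonoidAlgebra L G)))
          = ∑ j, σ (a j) • ((b j : MonoidAlgebra L G)) := by
        intro σ
        rw [twist_sum_smul]
        exact Finset.sum_congr rfl (fun j _ => by
          rw [(mem_Hsub_iff K L _).mp (b j).2 σ])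
      have h4 : ∑ j, (Algebra.trace K L (c * a j)) • ((b j : MonoidAlgebra L G)) = 0 := by
        have e1 : ∀ j ∈ Finset.univ, (Algebra.trace K L (c * a j)) • ((b j : MonoidAlgebra L G))
            = (∑ σ : G, σ (c * a j)) • ((b j : MonoidAlgebra L G)) := by
          intro j _
          rw [← trace_eq_sum_automorphisms, algebraMap_smul]
        rw [Finset.sum_congr rfl e1]
        have e2 : ∀ j ∈ Finset.univ, (∑ σ : G, σ (c * a j)) • ((b j : MonoidAlgebra L G))
            = ∑ σ : G, σ (c * a j) • ((b j : MonoidAlgebra L G)) := by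
          intro j _
          rw [Finset.sum_smul]
        rw [Finset.sum_congr rfl e2, Finset.sum_comm]
        have e3 : ∀ σ : G, ∑ j, σ (c * a j) • ((b j : MonoidAlgebra L G))
            = σ c • twist K L σ (∑ j, a j • ((b j : MonoidAlgebra L G))) := by
          intro σ
          rw [htw, Finset.smul_sum]
          exact Finset.sum_congr rfl (fun j _ => by rw [map_mul, smul_smul])
        rw [Finset.sum_congr rfl (fun σ _ => e3 σ)]
        have e4 : ∀ σ : G, σ c • twist K L σ (∑ j, a j • ((b j : MonoidAlgebra L G)))
            = 0 := by
          intro σ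
          rw [ha, twist_zero, smul_zero]
        rw [Finset.sum_congr rfl (fun σ _ => e4 σ), Finset.sum_const_zero]
      exact (Fintype.linearIndependent_iff.mp lik) _ h4 i
    apply (traceForm_nondegenerate K L).1 (a i)
    intro c
    rw [Algebra.traceForm_apply, mul_comm]
    exact key c
  have hcard := liL.fintype_card_le_finrank
  rw [finrank_malg_L] at hcard
  simpa using hcard

lemma range_kAct (x : L) :
    (Set.range fun z : MonoidAlgebra K G => kAct K L z x)
      = ↑(Submodule.span K (Set.range fun σ : G => σ x)) := by
  classical
  apply subset_antisymm
  · rintro _ ⟨z, rfl⟩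
    beta_reduce
    rw [SetLike.mem_coe, kAct_eq_sum]
    exact Submodule.sum_mem _ fun σ _ =>
      Submodule.smul_mem _ _ (Submodule.subset_span ⟨σ, rfl⟩)
  · intro y hy
    rw [SetLike.mem_coe] at hy
    induction hy using Submodule.span_induction with
    | mem v hv =>
      obtain ⟨σ, rfl⟩ := hv
      refine ⟨MonoidAlgebra.single σ 1, ?_⟩
      beta_reduce
      rw [kAct_eq_sum]
      simp [MonoidAlgebra.coeff_single, Finsupp.single_apply, ite_smul]
    | zero => exact ⟨0, by beta_reduce; rw [kAct_eq_sum]; simp⟩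
    | add u v _ _ hu hv =>
      obtain ⟨zu, hzu⟩ := hu
      obtain ⟨zv, hzv⟩ := hv
      refine ⟨zu + zv, ?_⟩
      beta_reduce
      beta_reduce at hzu hzv
      rw [kAct_eq_sum] at hzu hzv ⊢
      rw [Finset.sum_congr rfl (fun ρ _ => by
          rw [MonoidAlgebra.coeff_add, Finsupp.add_apply zu.coeff zv.coeff ρ, add_smul] :
          ∀ ρ ∈ Finset.univ, (zu + zv).coeff ρ • ρ x = zu.coeff ρ • ρ x + zv.coeff ρ • ρ x),
        Finset.sum_add_distrib, hzu, hzv]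
    | smul c u _ hu =>
      obtain ⟨zu, hzu⟩ := hu
      refine ⟨c • zu, ?_⟩
      beta_reduce
      beta_reduce at hzu
      rw [kAct_eq_sum] at hzu ⊢
      rw [Finset.sum_congr rfl (fun ρ _ => by
          rw [MonoidAlgebra.coeff_smul_apply, smul_eq_mul, mul_smul] :
          ∀ ρ ∈ Finset.univ, (c • zu).coeff ρ • ρ x = c • (zu.coeff ρ • ρ x)),
        ← Finset.smul_sum, hzu]

lemma forward_dir (x : L)
    (hspan : Submodule.span K (Set.range fun σ : G => σ x) = ⊤) :
    ∀ y : L, ∃ h ∈ Hlambda K L, lAct K L h x = y := by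
  intro y
  have hcard : Fintype.card G = finrank K L := by
    rw [← Nat.card_eq_fintype_card]; exact IsGalois.card_aut_eq_finrank K L
  have htop : ⊤ ≤ Submodule.span K (Set.range fun σ : G => σ x) := le_of_eq hspan.symm
  have li : LinearIndependent K (fun σ : G => σ x) :=
    linearIndependent_of_top_le_span_of_card_eq_finrank htop hcard
  let B : Basis G K L := Basis.mk li htop
  have hB : ∀ σ : G, B σ = σ x := fun σ => Basis.mk_apply li htop σ
  let f : L →ₗ[K] L := B.constr K (fun σ : G => σ y)
  have hfB : ∀ σ : G, f (B σ) = σ y := fun σ => B.constr_basis K _ σ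
  have hfE : f ∈ Esub K L := by
    intro ρ
    apply B.ext
    intro σ
    simp only [LinearMap.comp_apply, AlgEquiv.toLinearMap_apply]
    have h1 : ρ (B σ) = B (ρ * σ) := by
      rw [hB σ, hB (ρ * σ)]
      rfl
    rw [h1, hfB (ρ * σ), hfB σ]
    rfl
  obtain ⟨h, hh⟩ := Phi_surjective K L f
  refine ⟨h, ?_, ?_⟩
  · rw [← mem_Hsub_iff]
    exact Submodule.mem_comap.mpr (hh ▸ hfE)
  · rw [← Phi_apply, hh]
    have hx : x = B 1 := by
      rw [hB 1]
      rfl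
    rw [hx, hfB 1]
    rfl

lemma backward_dir (x : L)
    (hsur : ∀ y : L, ∃ h ∈ Hlambda K L, lAct K L h x = y) :
    Submodule.span K (Set.range fun σ : G => σ x) = ⊤ := by
  classical
  let ev : Hsub K L →ₗ[K] L :=
    { toFun := fun h => Phi K L h.1 x
      map_add' := by
        intro a b
        beta_reduce
        rw [Submodule.coe_add, map_add]
        rfl
      map_smul' := by
        intro c a
        show Phi K L ((c • a : Hsub K L) : MonoidAlgebra L G) x
          = RingHom.id K c • Phi K L (a : MonoidAlgebra L G) x
        rw [Submodule.coe_smul, map_smul]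
        rfl }
  have hevsur : Function.Surjective ev := by
    intro y
    obtain ⟨h, hmem, hval⟩ := hsur y
    exact ⟨⟨h, (mem_Hsub_iff K L h).mpr hmem⟩, by
      show Phi K L h x = y
      rw [Phi_apply]
      exact hval⟩
  have hker : LinearMap.ker ev = ⊥ := by
    have h1 := LinearMap.finrank_range_add_finrank_ker ev
    rw [LinearMap.range_eq_top.mpr hevsur, finrank_top] at h1
    have h2 : finrank K L = Fintype.card G := by
      rw [← Nat.card_eq_fintype_card]; exact (IsGalois.card_aut_eq_finrank K L).symm
    have h3 := finrank_Hsub_le K L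
    have h0 : finrank K (LinearMap.ker ev) = 0 := by omega
    exact Submodule.finrank_eq_zero.mp h0
  by_contra hne
  set U := Submodule.span K (Set.range fun σ : G => σ x) with hU
  obtain ⟨y₀, _, hy₀⟩ := SetLike.exists_of_lt ((lt_top_iff_ne_top (a := U)).mpr hne)
  have hv : (U.mkQ y₀ : L ⧸ U) ≠ 0 := by
    rw [Submodule.mkQ_apply, ne_eq, Submodule.Quotient.mk_eq_zero]
    exact hy₀
  obtain ⟨ψ, hψ⟩ : ∃ ψ : Module.Dual K (L ⧸ U), ψ (U.mkQ y₀) ≠ 0 := by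
    by_contra hall
    push_neg at hall
    exact hv ((Module.forall_dual_apply_eq_zero_iff K _).mp hall)
  let φ : L →ₗ[K] K := ψ ∘ₗ U.mkQ
  have hφU : ∀ σ : G, φ (σ x) = 0 := by
    intro σ
    have hmem : σ x ∈ U := Submodule.subset_span ⟨σ, rfl⟩
    show ψ (U.mkQ (σ x)) = 0
    rw [Submodule.mkQ_apply, (Submodule.Quotient.mk_eq_zero U).mpr hmem, map_zero]
  have hφy : φ y₀ ≠ 0 := hψ
  let favg : L → (L →ₗ[K] L) := fun w =>
    ∑ σ : G, LinearMap.smulRight (φ ∘ₗ σ.toLinearMap) ((σ⁻¹ : G) w)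
  have favg_apply : ∀ w y, favg w y = ∑ σ : G, φ (σ y) • (σ⁻¹ : G) w := by
    intro w y
    simp [favg, LinearMap.sum_apply, LinearMap.smulRight_apply]
  have hexw : ∃ w, favg w y₀ ≠ 0 := by
    by_contra hall
    push_neg at hall
    let z : MonoidAlgebra L G :=
      MonoidAlgebra.ofCoeff (Finsupp.equivFunOnFinite.symm (fun σ : G => algebraMap K L (φ (σ y₀))))
    have hzco : ∀ τ : G, z.coeff τ = algebraMap K L (φ (τ y₀)) := fun τ => rfl
    have hz : Phi K L z = 0 := by
      apply LinearMap.ext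
      intro w
      rw [Phi_apply, lAct_eq_sum, LinearMap.zero_apply]
      rw [Finset.sum_congr rfl (fun τ _ => by
          rw [hzco τ, ← Algebra.smul_def] :
          ∀ τ ∈ Finset.univ, z.coeff τ * τ⁻¹ w = φ (τ y₀) • (τ⁻¹ : G) w)]
      rw [← favg_apply w y₀]
      exact hall w
    have hz0 : z = 0 := by
      apply Phi_injective K L
      rw [hz, map_zero]
    have : algebraMap K L (φ y₀) = 0 := by
      have h1 : z.coeff 1 = 0 := by rw [hz0]; rfl
      rw [hzco 1] at h1
      have : (1 : G) y₀ = y₀ := rfl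
      rwa [this] at h1
    exact hφy ((algebraMap K L).injective (by rwa [map_zero]))
  obtain ⟨w, hw⟩ := hexw
  have hfE : favg w ∈ Esub K L := by
    intro ρ
    apply LinearMap.ext
    intro y
    simp only [LinearMap.comp_apply, AlgEquiv.toLinearMap_apply]
    rw [favg_apply, favg_apply, map_sum]
    apply Fintype.sum_equiv (Equiv.mulRight ρ⁻¹)
    intro σ
    have e1 : ρ (φ (σ y) • (σ⁻¹ : G) w) = φ (σ y) • ρ ((σ⁻¹ : G) w) := by
      exact ρ.toLinearMap.map_smul (φ (σ y)) ((σ⁻¹ : G) w)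
    rw [e1]
    have e2 : ((Equiv.mulRight ρ⁻¹ σ : G)) (ρ y) = σ y := by
      show (σ * ρ⁻¹) (ρ y) = σ y
      have h' : (σ * ρ⁻¹) (ρ y) = σ (ρ⁻¹ (ρ y)) := rfl
      rw [h']
      exact congrArg σ (ρ.symm_apply_apply y)
    have e3 : (((Equiv.mulRight ρ⁻¹ σ : G))⁻¹ : G) w = ρ ((σ⁻¹ : G) w) := by
      show ((σ * ρ⁻¹)⁻¹ : G) w = ρ ((σ⁻¹ : G) w)
      have hg : ((σ * ρ⁻¹)⁻¹ : G) = ρ * σ⁻¹ := by group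
      rw [hg]
      rfl
    rw [e2, e3]
  obtain ⟨h, hh⟩ := Phi_surjective K L (favg w)
  have hmem : h ∈ Hsub K L := Submodule.mem_comap.mpr (hh ▸ hfE)
  have hval : ev ⟨h, hmem⟩ = 0 := by
    show Phi K L h x = 0
    rw [hh, favg_apply]
    exact Finset.sum_eq_zero fun σ _ => by rw [hφU σ, zero_smul]
  have hzero : (⟨h, hmem⟩ : Hsub K L) = 0 := by
    have hk : (⟨h, hmem⟩ : Hsub K L) ∈ LinearMap.ker ev := LinearMap.mem_ker.mpr hval
    rwa [hker, Submodule.mem_bot] at hk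
  have hh0 : h = 0 := congrArg Subtype.val hzero
  apply hw
  have hfw0 : favg w = 0 := by rw [← hh, hh0, map_zero]
  rw [hfw0]
  rfl

end NBG

/-- `x` generates `L` as a `K[G]`-module iff `x` generates `L`
as an `H_λ`-module. -/
theorem normal_basis_generator_iff_Hlambda_generator
    (K L : Type*) [Field K] [Field L] [Algebra K L]
    [FiniteDimensional K L] [IsGalois K L] (x : L) :
    (Set.range fun z : MonoidAlgebra K (L ≃ₐ[K] L) => kAct K L z x) = Set.univ ↔
      (Set.range fun h : Hlambda K L => lAct K L h.1 x) = Set.univ := by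
  have hiff1 : (Set.range fun z : MonoidAlgebra K (L ≃ₐ[K] L) => kAct K L z x) = Set.univ
      ↔ Submodule.span K (Set.range fun σ : L ≃ₐ[K] L => σ x) = ⊤ := by
    rw [range_kAct]
    constructor
    · intro hcoe
      apply Submodule.eq_top_iff'.mpr
      intro y
      have := Set.eq_univ_iff_forall.mp hcoe y
      exact this
    · intro htop
      rw [htop]
      exact Submodule.top_coe
  constructor
  · intro h1
    apply Set.eq_univ_iff_forall.mpr
    intro y
    obtain ⟨h, hmem, hval⟩ := forward_dir K L x (hiff1.mp h1) y
    exact ⟨⟨h, hmem⟩, hval⟩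
  · intro h2
    apply hiff1.mpr
    apply backward_dir K L x
    intro y
    have hmem : y ∈ (Set.range fun h : Hlambda K L => lAct K L h.1 x) :=
      h2 ▸ Set.mem_univ y
    obtain ⟨⟨h, hm⟩, hval⟩ := hmem
    exact ⟨h, hm, hval⟩
end

section
/- For every h ∈ H_λ, every z ∈ K[G], and every t ∈ L, one has h·(z•t) = z•(h·t); that is, the action of the Hopf algebra H_λ on L commutes with the action of the group algebra K[G] on L. -/
lemma lAct_smul (K L : Type*) [Field K] [Field L] [Algebra K L]
    (h : MonoidAlgebra L (L ≃ₐ[K] L)) (c : K) (x : L) :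
    lAct K L h (c • x) = c • lAct K L h x := by
  unfold lAct
  rw [Finsupp.smul_sum]
  refine Finsupp.sum_congr fun τ _ => ?_
  rw [map_smul, mul_smul_comm]

lemma lAct_key (K L : Type*) [Field K] [Field L] [Algebra K L]
    (h : MonoidAlgebra L (L ≃ₐ[K] L)) (hh : h ∈ Hlambda K L)
    (σ : L ≃ₐ[K] L) (t : L) :
    lAct K L h (σ t) = σ (lAct K L h t) := by
  conv_lhs => rw [← hh σ]
  unfold twist lAct
  simp only [MonoidAlgebra.coeff_finsuppSum, MonoidAlgebra.coeff_single]
  rw [Finsupp.sum_sum_index (by simp) (by intros; rw [add_mul]),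
    map_finsuppSum]
  refine Finsupp.sum_congr fun τ _ => ?_
  rw [Finsupp.sum_single_index (by simp), map_mul]
  congr 1
  simp only [mul_inv_rev, inv_inv, AlgEquiv.mul_apply,
    show σ⁻¹ (σ t) = t from σ.symm_apply_apply t]

/-- The action of `H_λ` on `L` commutes with the action of `K[G]` on `L`. -/
theorem Hlambda_action_commutes_with_group_action
    (K L : Type*) [Field K] [Field L] [Algebra K L]
    [FiniteDimensional K L] [IsGalois K L]
    (h : MonoidAlgebra L (L ≃ₐ[K] L)) (hh : h ∈ Hlambda K L)
    (z : MonoidAlgebra K (L ≃ₐ[K] L)) (t : L) :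
    lAct K L h (kAct K L z t) = kAct K L z (lAct K L h t) := by
  unfold kAct
  classical
  rw [Finsupp.sum, Finsupp.sum]
  induction z.coeff.support using Finset.induction_on with
  | empty => simp [lAct]
  | insert _ _ hnotmem ih =>
      rw [Finset.sum_insert hnotmem, Finset.sum_insert hnotmem, ← ih]
      have hadd : ∀ x y : L, lAct K L h (x + y) = lAct K L h x + lAct K L h y := by
        intro x y
        unfold lAct
        rw [← Finsupp.sum_add]
        exact Finsupp.sum_congr fun τ _ => by rw [map_add, mul_add]
      rw [hadd, lAct_smul, lAct_key K L h hh]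
end

section
/- For all a, b ∈ L, the element h = ∑_{g∈G} ( ∑_{ρ∈G} ρ(a) · (g⁻¹ρ)(b) ) g of the group algebra L[G] is fixed under the twisted G-action, i.e. σ∗h = h for every σ ∈ G, and hence h ∈ H_λ = L[G]^G. -/
lemma twist_single (K L : Type*) [Field K] [Field L] [Algebra K L]
    (σ g : L ≃ₐ[K] L) (c : L) :
    twist K L σ (MonoidAlgebra.single g c) = MonoidAlgebra.single (σ * g * σ⁻¹) (σ c) := by
  unfold twist
  rw [MonoidAlgebra.coeff_single, Finsupp.sum_single_index]
  simp

lemma twist_add (K L : Type*) [Field K] [Field L] [Algebra K L]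
    (σ : L ≃ₐ[K] L) (x y : MonoidAlgebra L (L ≃ₐ[K] L)) :
    twist K L σ (x + y) = twist K L σ x + twist K L σ y := by
  classical
  unfold twist
  rw [MonoidAlgebra.coeff_add, Finsupp.sum_add_index]
  · intro g _; simp
  · intro g _ c d; simp [map_add, Finsupp.single_add]

lemma twist_sum (K L : Type*) [Field K] [Field L] [Algebra K L]
    (σ : L ≃ₐ[K] L) {ι : Type*} (s : Finset ι) (f : ι → MonoidAlgebra L (L ≃ₐ[K] L)) :
    twist K L σ (∑ i ∈ s, f i) = ∑ i ∈ s, twist K L σ (f i) := by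
  classical
  induction s using Finset.induction with
  | empty => simp [twist]
  | insert _ _ h ih => simp [Finset.sum_insert h, twist_add, ih]

/-- For all `a, b ∈ L`, the element
`h = ∑_{g ∈ G} (∑_{ρ ∈ G} ρ(a) (g⁻¹ρ)(b)) g` of `L[G]` is fixed under the twisted
`G`-action, and hence lies in `H_λ = L[G]^G`. -/
theorem sum_element_mem_Hlambda
    (K L : Type*) [Field K] [Field L] [Algebra K L]
    [FiniteDimensional K L] [IsGalois K L] (a b : L) :
    (∀ σ : L ≃ₐ[K] L,
        twist K L σ
            (∑ g : L ≃ₐ[K] L,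
              MonoidAlgebra.single g (∑ ρ : L ≃ₐ[K] L, ρ a * (g⁻¹ * ρ) b)) =
          ∑ g : L ≃ₐ[K] L,
            MonoidAlgebra.single g (∑ ρ : L ≃ₐ[K] L, ρ a * (g⁻¹ * ρ) b)) ∧
      (∑ g : L ≃ₐ[K] L,
          MonoidAlgebra.single g (∑ ρ : L ≃ₐ[K] L, ρ a * (g⁻¹ * ρ) b)) ∈ Hlambda K L := by
  have key : ∀ σ : L ≃ₐ[K] L,
      twist K L σ
          (∑ g : L ≃ₐ[K] L,
            MonoidAlgebra.single g (∑ ρ : L ≃ₐ[K] L, ρ a * (g⁻¹ * ρ) b)) =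
        ∑ g : L ≃ₐ[K] L,
          MonoidAlgebra.single g (∑ ρ : L ≃ₐ[K] L, ρ a * (g⁻¹ * ρ) b) := by
    intro σ
    rw [twist_sum]
    simp only [twist_single]
    refine Fintype.sum_equiv (MulAut.conj σ).toEquiv _ _ fun g => ?_
    have hg : (MulAut.conj σ).toEquiv g = σ * g * σ⁻¹ := rfl
    rw [hg]
    congr 1
    rw [map_sum]
    refine Fintype.sum_equiv (Equiv.mulLeft σ) _ _ fun ρ => ?_
    have h1 : σ (ρ a * (g⁻¹ * ρ) b) = (σ * ρ) a * (σ * (g⁻¹ * ρ)) b := by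
      rw [map_mul]; rfl
    rw [h1]
    have h2 : Equiv.mulLeft σ ρ = σ * ρ := rfl
    rw [h2]
    congr 1
    have : (σ * g * σ⁻¹)⁻¹ * (σ * ρ) = σ * (g⁻¹ * ρ) := by group
    rw [this]
  exact ⟨key, key⟩
end
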